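/- arXiv:1102.0948 — 2 statements merged into one kernel-verified Lean document; each statement's English description precedes it below -/
import Mathlib

section
/- Let X be a positive semidefinite operator on H_n ⊗ H_n whose range is contained in the symmetric subspace S (i.e., X = P_S X P_S). Then sup over product unit vectors ⟨ψχ|X|ψχ⟩ equals sup over symmetric product unit vectors ⟨φφ|X|φφ⟩; that is, ‖X‖_{S(1)} = max_{|φ⟩ ∈ H_n, ‖φ‖=1} ⟨φφ|X|φφ⟩. -/
open Matrix BigOperators
open scoped ComplexOrder

noncomputable section

/-- |φ⟩⟨φ| as a matrix. -/
def ketbra {n : ℕ} (φ : Fin n → ℂ) : Matrix (Fin n) (Fin n) ℂ :=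
  Matrix.vecMulVec φ (star φ)

/-- Quadratic form ⟨v|M|v⟩. -/
def qf {m : Type*} [Fintype m] (M : Matrix m m ℂ) (v : m → ℂ) : ℂ :=
  star v ⬝ᵥ M *ᵥ v

/-- Tensor (Kronecker) product of vectors |ψ⟩⊗|χ⟩. -/
def kron {n : ℕ} (ψ χ : Fin n → ℂ) : Fin n × Fin n → ℂ :=
  fun p => ψ p.1 * χ p.2

/-- Unit vector predicate. -/
def unitv {n : ℕ} (φ : Fin n → ℂ) : Prop := star φ ⬝ᵥ φ = 1

/-- Linear maps on L(H_n), represented as linear maps on n×n matrices. -/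
abbrev MatMap (n : ℕ) := Matrix (Fin n) (Fin n) ℂ →ₗ[ℂ] Matrix (Fin n) (Fin n) ℂ

/-- Choi matrix C_Λ = Σ_{i,j} |i⟩⟨j| ⊗ Λ(|i⟩⟨j|). -/
def choi {n : ℕ} (Λ : MatMap n) : Matrix (Fin n × Fin n) (Fin n × Fin n) ℂ :=
  Matrix.of fun p q => Λ (Matrix.single p.1 q.1 1) p.2 q.2

/-- Partial transpose on the first factor, i.e. (T ⊗ id_n)(M). -/
def ptA {n : ℕ} (M : Matrix (Fin n × Fin n) (Fin n × Fin n) ℂ) :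
    Matrix (Fin n × Fin n) (Fin n × Fin n) ℂ :=
  Matrix.of fun p q => M (q.1, p.2) (p.1, q.2)

/-- The flip (swap) operator F on H_n ⊗ H_n. -/
def flipOp (n : ℕ) : Matrix (Fin n × Fin n) (Fin n × Fin n) ℂ :=
  Matrix.of fun p q => if p.1 = q.2 ∧ p.2 = q.1 then 1 else 0

/-- Projection onto the symmetric subspace, P_S = (1/2)(I + F). -/
def Psym (n : ℕ) : Matrix (Fin n × Fin n) (Fin n × Fin n) ℂ :=
  (1/2 : ℂ) • (1 + flipOp n)

/-- Gate fidelity F_Λ(|φ⟩) = ⟨φ|Λ(|φ⟩⟨φ|)|φ⟩. -/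
def fid {n : ℕ} (Λ : MatMap n) (φ : Fin n → ℂ) : ℂ := qf (Λ (ketbra φ)) φ

/-- Trace preserving. -/
def IsTP {n : ℕ} (Λ : MatMap n) : Prop := ∀ X, (Λ X).trace = X.trace

/-- Completely positive (via Choi's theorem: Choi matrix PSD). -/
def IsCP {n : ℕ} (Λ : MatMap n) : Prop := (choi Λ).PosSemidef

/-- Quantum channel: completely positive and trace preserving. -/
def IsChannel {n : ℕ} (Λ : MatMap n) : Prop := IsCP Λ ∧ IsTP Λ

/-- Λd is the Hilbert–Schmidt dual of Λ : Tr(Λ(X)Y) = Tr(X Λd(Y)). -/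
def IsDual {n : ℕ} (Λ Λd : MatMap n) : Prop :=
  ∀ X Y, (Λ X * Y).trace = (X * Λd Y).trace

/-- Standard basis vector. -/
def stdV (n : ℕ) (i : Fin n) : Fin n → ℂ := Pi.single i 1

/-- The symmetric subspace S = span{|i⟩|j⟩ + |j⟩|i⟩}. -/
def Ssub (n : ℕ) : Submodule ℂ (Fin n × Fin n → ℂ) :=
  Submodule.span ℂ {v | ∃ i j, v = kron (stdV n i) (stdV n j) + kron (stdV n j) (stdV n i)}

/-- The maximally entangled state |ψ₊⟩ = (1/√n) Σ_j |jj⟩. -/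
def psiPlus (n : ℕ) : Fin n × Fin n → ℂ :=
  fun p => if p.1 = p.2 then ((Real.sqrt n : ℂ))⁻¹ else 0

/- ========== auxiliary lemmas for stmt17 ========== -/

lemma aux_Bf_star {m : Type*} [Fintype m] {X : Matrix m m ℂ} (hX : X.IsHermitian) (a b : m → ℂ) :
    star a ⬝ᵥ X *ᵥ b = star (star b ⬝ᵥ X *ᵥ a) := by
  rw [Matrix.star_dotProduct, Matrix.star_mulVec, hX.eq, ← Matrix.dotProduct_mulVec]

lemma aux_re_comm {m : Type*} [Fintype m] {X : Matrix m m ℂ} (hX : X.IsHermitian) (a b : m → ℂ) :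
    (star b ⬝ᵥ X *ᵥ a).re = (star a ⬝ᵥ X *ᵥ b).re := by
  rw [aux_Bf_star hX b a]; exact Complex.conj_re _

lemma aux_qf_smul {m : Type*} [Fintype m] (X : Matrix m m ℂ) (z : ℂ) (v : m → ℂ) :
    qf X (z • v) = star z * z * qf X v := by
  simp [qf, Matrix.mulVec_smul, smul_dotProduct, dotProduct_smul, star_smul,
    smul_eq_mul]
  ring

lemma aux_cs {m : Type*} [Fintype m] {X : Matrix m m ℂ} (hX : X.PosSemidef) (a b : m → ℂ) :
    ((star a ⬝ᵥ X *ᵥ b).re)^2 ≤ (star a ⬝ᵥ X *ᵥ a).re * (star b ⬝ᵥ X *ᵥ b).re := by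
  have hkey : ∀ t : ℝ, 0 ≤ (star a ⬝ᵥ X *ᵥ a).re * (t*t)
      + (2*(star a ⬝ᵥ X *ᵥ b).re) * t + (star b ⬝ᵥ X *ᵥ b).re := by
    intro t
    have h0 := hX.dotProduct_mulVec_nonneg ((t:ℂ) • a + b)
    have hre : 0 ≤ (star ((t:ℂ) • a + b) ⬝ᵥ X *ᵥ ((t:ℂ) • a + b)).re :=
      (Complex.le_def.mp h0).1
    have hexp : star ((t:ℂ) • a + b) ⬝ᵥ X *ᵥ ((t:ℂ) • a + b)
        = (t:ℂ) * (t:ℂ) * (star a ⬝ᵥ X *ᵥ a) + (t:ℂ) * ((star a ⬝ᵥ X *ᵥ b)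
          + (star b ⬝ᵥ X *ᵥ a)) + (star b ⬝ᵥ X *ᵥ b) := by
      simp [Matrix.mulVec_add, Matrix.mulVec_smul, add_dotProduct,
        dotProduct_add, smul_dotProduct, dotProduct_smul, star_add,
        star_smul, smul_eq_mul]
      ring
    rw [hexp] at hre
    have hba := aux_re_comm hX.1 a b
    simp only [Complex.add_re, Complex.mul_re, Complex.mul_im, Complex.ofReal_re,
      Complex.ofReal_im] at hre
    rw [hba] at hre
    ring_nf at hre ⊢
    linarith
  have hd := discrim_le_zero hkey
  rw [discrim] at hd
  nlinarith [hd]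

lemma aux_Psym_herm (n : ℕ) : (Psym n).IsHermitian := by
  have hf : (flipOp n).IsHermitian := by
    ext p q
    simp only [conjTranspose_apply, flipOp, Matrix.of_apply]
    by_cases h : q.1 = p.2 ∧ q.2 = p.1
    · rw [if_pos h, if_pos ⟨h.2.symm, h.1.symm⟩]; simp
    · rw [if_neg h, if_neg (fun hc => h ⟨hc.2.symm, hc.1.symm⟩)]; simp
  have h1 : ((1 : Matrix (Fin n × Fin n) (Fin n × Fin n) ℂ) + flipOp n).IsHermitian :=
    Matrix.IsHermitian.add Matrix.isHermitian_one hf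
  show ((1/2 : ℂ) • (1 + flipOp n))ᴴ = (1/2 : ℂ) • (1 + flipOp n)
  rw [Matrix.conjTranspose_smul, h1.eq,
    show star (1/2 : ℂ) = (1/2 : ℂ) by
      rw [show (1/2 : ℂ) = ((1/2 : ℝ) : ℂ) by norm_num, Complex.star_def, Complex.conj_ofReal]]

lemma aux_flip_mulVec {n : ℕ} (ψ χ : Fin n → ℂ) : flipOp n *ᵥ kron ψ χ = kron χ ψ := by
  funext p
  simp only [Matrix.mulVec, dotProduct, flipOp, Matrix.of_apply, kron]
  rw [Finset.sum_eq_single (p.2, p.1)]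
  · simp [mul_comm]
  · rintro ⟨q1, q2⟩ - hq
    rw [if_neg]
    · ring
    · rintro ⟨h1, h2⟩; exact hq (Prod.ext h2.symm h1.symm)
  · simp

lemma aux_Psym_mulVec {n : ℕ} (ψ χ : Fin n → ℂ) :
    Psym n *ᵥ kron ψ χ = (1/2 : ℂ) • (kron ψ χ + kron χ ψ) := by
  show ((1/2 : ℂ) • (1 + flipOp n)) *ᵥ kron ψ χ = _
  rw [Matrix.smul_mulVec, Matrix.add_mulVec, Matrix.one_mulVec, aux_flip_mulVec]

lemma aux_qf_Psym {n : ℕ} {X : Matrix (Fin n × Fin n) (Fin n × Fin n) ℂ}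
    (hsupp : Psym n * X * Psym n = X) (w : Fin n × Fin n → ℂ) :
    qf X w = qf X (Psym n *ᵥ w) := by
  conv_lhs => rw [← hsupp]
  unfold qf
  rw [Matrix.star_mulVec, (aux_Psym_herm n).eq, ← Matrix.dotProduct_mulVec,
    ← Matrix.mulVec_mulVec, ← Matrix.mulVec_mulVec, Matrix.dotProduct_mulVec]

lemma aux_half_kron {n : ℕ} (ψ χ : Fin n → ℂ) :
    (1/2 : ℂ) • (kron ψ χ + kron χ ψ)
      = (1/4 : ℂ) • (kron (ψ + χ) (ψ + χ) - kron (ψ - χ) (ψ - χ)) := by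
  funext p
  simp only [kron, Pi.smul_apply, Pi.add_apply, Pi.sub_apply, smul_eq_mul]
  ring

lemma aux_qf_quarter {m : Type*} [Fintype m] {X : Matrix m m ℂ} (hX : X.IsHermitian)
    (x y : m → ℂ) :
    (qf X ((1/4 : ℂ) • (x - y))).re
      = ((qf X x).re + (qf X y).re - 2 * (star x ⬝ᵥ X *ᵥ y).re) / 16 := by
  have hexp : qf X ((1/4 : ℂ) • (x - y))
      = (((1/16 : ℝ)) : ℂ) * (qf X x + qf X y - (star x ⬝ᵥ X *ᵥ y + star y ⬝ᵥ X *ᵥ x)) := by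
    simp only [qf, Matrix.mulVec_smul, Matrix.mulVec_sub, smul_dotProduct,
      dotProduct_smul, sub_dotProduct, dotProduct_sub, star_smul,
      star_sub, smul_eq_mul]
    push_cast
    rw [show star (1/4 : ℂ) = (1/4 : ℂ) by norm_num [Complex.star_def, map_div₀]]
    ring
  rw [hexp, Complex.re_ofReal_mul]
  have hyx := aux_re_comm hX x y
  simp only [Complex.sub_re, Complex.add_re]
  rw [hyx]; unfold qf; ring

lemma aux_dot_self_real {n : ℕ} (u : Fin n → ℂ) :
    star u ⬝ᵥ u = ((∑ i, Complex.normSq (u i) : ℝ) : ℂ) := by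
  push_cast
  simp [dotProduct, Complex.normSq_eq_conj_mul_self]

lemma aux_kron_smul {n : ℕ} (z w : ℂ) (ψ χ : Fin n → ℂ) :
    kron (z • ψ) (w • χ) = (z * w) • kron ψ χ := by
  funext p
  simp only [kron, Pi.smul_apply, smul_eq_mul]
  ring

lemma aux_scale_bound {n : ℕ} {X : Matrix (Fin n × Fin n) (Fin n × Fin n) ℂ}
    (hX : X.PosSemidef) {M : ℝ} (hM0 : 0 ≤ M)
    (hM : ∀ φ : Fin n → ℂ, unitv φ → (qf X (kron φ φ)).re ≤ M) (u : Fin n → ℂ) :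
    (qf X (kron u u)).re ≤ ((star u ⬝ᵥ u).re)^2 * M := by
  by_cases hu : u = 0
  · have : kron u u = 0 := by funext p; simp [kron, hu]
    rw [this]
    have : qf X (0 : Fin n × Fin n → ℂ) = 0 := by simp [qf]
    rw [this]
    simp only [Complex.zero_re]
    exact mul_nonneg (sq_nonneg _) hM0
  · set a : ℝ := ∑ i, Complex.normSq (u i) with ha_def
    have hdot : star u ⬝ᵥ u = (a : ℂ) := aux_dot_self_real u
    have ha : 0 < a := by
      obtain ⟨i, hi⟩ := Function.ne_iff.mp hu
      exact Finset.sum_pos' (fun j _ => Complex.normSq_nonneg _)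
        ⟨i, Finset.mem_univ i, Complex.normSq_pos.mpr hi⟩
    set c : ℝ := Real.sqrt a with hc_def
    have hc : 0 < c := Real.sqrt_pos.mpr ha
    have hc2 : c * c = a := Real.mul_self_sqrt ha.le
    set v : Fin n → ℂ := ((c : ℂ))⁻¹ • u with hv_def
    have hvunit : unitv v := by
      unfold unitv
      rw [hv_def]
      simp only [star_smul, smul_dotProduct, dotProduct_smul, smul_eq_mul,
        star_inv₀, Complex.star_def, Complex.conj_ofReal]
      rw [hdot]
      field_simp
      norm_cast
      linarith [hc2]
    have huv : u = (c : ℂ) • v := by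
      rw [hv_def, smul_smul]
      rw [mul_inv_cancel₀ (by exact_mod_cast hc.ne')]
      simp
    have hkron : kron u u = ((c : ℂ) * (c : ℂ)) • kron v v := by
      rw [huv, aux_kron_smul]
    have : (qf X (kron u u)).re = a^2 * (qf X (kron v v)).re := by
      rw [hkron, aux_qf_smul]
      have hsr : star ((c:ℂ) * (c:ℂ)) = ((c:ℂ) * (c:ℂ)) := by
        simp [Complex.star_def, Complex.conj_ofReal]
      rw [hsr]
      have hthis : ((c:ℂ) * (c:ℂ)) * ((c:ℂ) * (c:ℂ)) = ((a^2 : ℝ) : ℂ) := by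
        rw [← hc2]
        push_cast
        ring
      rw [hthis, Complex.re_ofReal_mul]
    rw [this, hdot]
    simp only [Complex.ofReal_re]
    exact mul_le_mul_of_nonneg_left (hM v hvunit) (by positivity)

lemma aux_key {n : ℕ} {X : Matrix (Fin n × Fin n) (Fin n × Fin n) ℂ}
    (hX : X.PosSemidef) (hsupp : Psym n * X * Psym n = X) {M : ℝ} (hM0 : 0 ≤ M)
    (hM : ∀ φ : Fin n → ℂ, unitv φ → (qf X (kron φ φ)).re ≤ M)
    {ψ χ : Fin n → ℂ} (hψ : unitv ψ) (hχ : unitv χ) :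
    (qf X (kron ψ χ)).re ≤ M := by
  set u := ψ + χ with hu_def
  set w := ψ - χ with hw_def
  have hstep : qf X (kron ψ χ)
      = qf X ((1/4 : ℂ) • (kron u u - kron w w)) := by
    rw [aux_qf_Psym hsupp, aux_Psym_mulVec, aux_half_kron]
  rw [hstep, aux_qf_quarter hX.1]
  -- abbreviations
  set qa : ℝ := (qf X (kron u u)).re with hqa
  set qb : ℝ := (qf X (kron w w)).re with hqb
  set r : ℝ := (star (kron u u) ⬝ᵥ X *ᵥ (kron w w)).re with hr
  have hqa0 : 0 ≤ qa := (Complex.le_def.mp (hX.dotProduct_mulVec_nonneg (kron u u))).1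
  have hqb0 : 0 ≤ qb := (Complex.le_def.mp (hX.dotProduct_mulVec_nonneg (kron w w))).1
  -- norms
  set A : ℝ := (star u ⬝ᵥ u).re with hA
  set B : ℝ := (star w ⬝ᵥ w).re with hB
  have hA0 : 0 ≤ A := by
    rw [hA, aux_dot_self_real]
    simp only [Complex.ofReal_re]
    exact Finset.sum_nonneg fun i _ => Complex.normSq_nonneg _
  have hB0 : 0 ≤ B := by
    rw [hB, aux_dot_self_real]
    simp only [Complex.ofReal_re]
    exact Finset.sum_nonneg fun i _ => Complex.normSq_nonneg _
  have hAB : A + B = 4 := by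
    have hexp : star u ⬝ᵥ u + star w ⬝ᵥ w = 2 * (star ψ ⬝ᵥ ψ) + 2 * (star χ ⬝ᵥ χ) := by
      rw [hu_def, hw_def]
      simp only [star_add, star_sub, add_dotProduct, dotProduct_add,
        sub_dotProduct, dotProduct_sub]
      ring
    rw [hψ, hχ] at hexp
    have := congrArg Complex.re hexp
    simp only [Complex.add_re] at this
    rw [← hA, ← hB] at this
    norm_num at this
    linarith
  -- bounds
  have hba : qa ≤ A^2 * M := by rw [hqa, hA]; exact aux_scale_bound hX hM0 hM u
  have hbb : qb ≤ B^2 * M := by rw [hqb, hB]; exact aux_scale_bound hX hM0 hM w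
  have hcs : r^2 ≤ qa * qb := aux_cs hX (kron u u) (kron w w)
  -- conclude
  have hrabs : -r ≤ Real.sqrt qa * Real.sqrt qb := by
    have h1 : -r ≤ |r| := neg_le_abs r
    have h2 : |r| = Real.sqrt (r^2) := (Real.sqrt_sq_eq_abs r).symm
    have h3 : Real.sqrt (r^2) ≤ Real.sqrt (qa * qb) := Real.sqrt_le_sqrt hcs
    rw [Real.sqrt_mul hqa0] at h3
    linarith
  have hsa : Real.sqrt qa ≤ A * Real.sqrt M := by
    have : Real.sqrt qa ≤ Real.sqrt (A^2 * M) := Real.sqrt_le_sqrt hba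
    rwa [Real.sqrt_mul (sq_nonneg A), Real.sqrt_sq hA0] at this
  have hsb : Real.sqrt qb ≤ B * Real.sqrt M := by
    have : Real.sqrt qb ≤ Real.sqrt (B^2 * M) := Real.sqrt_le_sqrt hbb
    rwa [Real.sqrt_mul (sq_nonneg B), Real.sqrt_sq hB0] at this
  have hM' : Real.sqrt M * Real.sqrt M = M := Real.mul_self_sqrt hM0
  have hcross : -r ≤ A * B * M := by
    calc -r ≤ Real.sqrt qa * Real.sqrt qb := hrabs
    _ ≤ (A * Real.sqrt M) * (B * Real.sqrt M) :=
        mul_le_mul hsa hsb (Real.sqrt_nonneg _) (mul_nonneg hA0 (Real.sqrt_nonneg _))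
    _ = A * B * (Real.sqrt M * Real.sqrt M) := by ring
    _ = A * B * M := by rw [hM']
  have hsq : A^2 + 2*(A*B) + B^2 = 16 := by linear_combination (A + B + 4) * hAB
  have h16 : A^2*M + B^2*M + 2*(A*B*M) = 16*M := by linear_combination M * hsq
  linarith [hba, hbb, hcross, h16]

lemma aux_cont_F {n : ℕ} (X : Matrix (Fin n × Fin n) (Fin n × Fin n) ℂ) :
    Continuous fun φ : Fin n → ℂ => (qf X (kron φ φ)).re := by
  have h1 : Continuous fun v : Fin n × Fin n → ℂ => (star v ⬝ᵥ X *ᵥ v).re := by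
    apply Complex.continuous_re.comp
    simp only [dotProduct, Matrix.mulVec, Pi.star_apply]
    apply continuous_finset_sum
    intro i _
    exact ((continuous_star.comp (continuous_apply i)).mul
      (continuous_finset_sum _ fun j _ => continuous_const.mul (continuous_apply j)))
  have h2 : Continuous fun φ : Fin n → ℂ => kron φ φ := by
    apply continuous_pi
    intro p
    exact (continuous_apply p.1).mul (continuous_apply p.2)
  exact h1.comp h2

lemma aux_cont_dot {n : ℕ} : Continuous fun φ : Fin n → ℂ => star φ ⬝ᵥ φ := by
  simp only [dotProduct, Pi.star_apply]
  apply continuous_finset_sum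
  intro i _
  exact (continuous_star.comp (continuous_apply i)).mul (continuous_apply i)

lemma aux_unit_normSq {n : ℕ} {φ : Fin n → ℂ} (hφ : unitv φ) :
    ∑ i, Complex.normSq (φ i) = 1 := by
  have := aux_dot_self_real φ
  rw [hφ] at this
  exact_mod_cast this.symm

lemma aux_K_closed (n : ℕ) : IsClosed {φ : Fin n → ℂ | unitv φ} := by
  have : {φ : Fin n → ℂ | unitv φ} = (fun φ : Fin n → ℂ => star φ ⬝ᵥ φ) ⁻¹' {1} := by
    ext φ; simp [unitv, Set.mem_preimage]
  rw [this]
  exact isClosed_singleton.preimage aux_cont_dot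

lemma aux_K_bdd (n : ℕ) : {φ : Fin n → ℂ | unitv φ} ⊆ Metric.closedBall 0 1 := by
  intro φ hφ
  rw [Metric.mem_closedBall, dist_zero_right]
  rw [pi_norm_le_iff_of_nonneg zero_le_one]
  intro i
  have hsum := aux_unit_normSq hφ
  have hle : Complex.normSq (φ i) ≤ 1 := by
    rw [← hsum]
    exact Finset.single_le_sum (fun j _ => Complex.normSq_nonneg (φ j)) (Finset.mem_univ i)
  have : ‖φ i‖^2 = Complex.normSq (φ i) := by
    rw [Complex.normSq_eq_norm_sq]
  nlinarith [norm_nonneg (φ i)]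

lemma aux_std_unit {n : ℕ} (i : Fin n) : unitv (Pi.single i (1:ℂ)) := by
  unfold unitv
  simp only [dotProduct, Pi.star_apply]
  rw [Finset.sum_eq_single i]
  · simp
  · intro j _ hj; simp [Pi.single_apply, hj]
  · simp

theorem stmt17 {n : ℕ} (hn : 0 < n)
    (X : Matrix (Fin n × Fin n) (Fin n × Fin n) ℂ)
    (hX : X.PosSemidef) (hsupp : Psym n * X * Psym n = X) :
    IsGreatest {r : ℝ | ∃ φ : Fin n → ℂ, unitv φ ∧ r = (qf X (kron φ φ)).re}
      (sSup {r : ℝ | ∃ ψ χ : Fin n → ℂ, unitv ψ ∧ unitv χ ∧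
        r = (qf X (kron ψ χ)).re}) := by
  have hKcomp : IsCompact {φ : Fin n → ℂ | unitv φ} :=
    (isCompact_closedBall (0 : Fin n → ℂ) 1).of_isClosed_subset (aux_K_closed n) (aux_K_bdd n)
  have hKne : Set.Nonempty {φ : Fin n → ℂ | unitv φ} :=
    ⟨Pi.single ⟨0, hn⟩ (1:ℂ), aux_std_unit _⟩
  obtain ⟨φ₀, hφ₀K, hmax⟩ := hKcomp.exists_isMaxOn hKne (aux_cont_F X).continuousOn
  have hφ₀ : unitv φ₀ := hφ₀K
  have hM0 : 0 ≤ (qf X (kron φ₀ φ₀)).re := (Complex.le_def.mp (hX.dotProduct_mulVec_nonneg (kron φ₀ φ₀))).1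
  have hMub : ∀ φ : Fin n → ℂ, unitv φ → (qf X (kron φ φ)).re ≤ (qf X (kron φ₀ φ₀)).re :=
    fun φ hφ => hmax hφ
  have hprodGreat : IsGreatest {r : ℝ | ∃ ψ χ : Fin n → ℂ, unitv ψ ∧ unitv χ ∧
      r = (qf X (kron ψ χ)).re} ((qf X (kron φ₀ φ₀)).re) := by
    constructor
    · exact ⟨φ₀, φ₀, hφ₀, hφ₀, rfl⟩
    · rintro r ⟨ψ, χ, hψ, hχ, rfl⟩
      exact aux_key hX hsupp hM0 hMub hψ hχ
  rw [hprodGreat.csSup_eq]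
  constructor
  · exact ⟨φ₀, hφ₀, rfl⟩
  · rintro r ⟨φ, hφ, rfl⟩
    exact hMub φ hφ
end
end

section
/- Let |ψ⟩, |χ⟩ ∈ H_n be unit vectors with ⟨ψ|χ⟩ real. Then the vector (1/2)(|ψ⟩⊗|χ⟩ + |χ⟩⊗|ψ⟩) can be written as α|ρ⟩⊗|ρ⟩ + β|σ⟩⊗|σ⟩ for some unit vectors |ρ⟩, |σ⟩ and reals α, β ≥ 0 with α + β = 1; explicitly α, β are the square roots of (1/4)(⟨ψ|χ⟩² ± 2⟨ψ|χ⟩ + 1), i.e., α = (1/2)|1 + ⟨ψ|χ⟩| and β = (1/2)|1 − ⟨ψ|χ⟩|. -/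
open Matrix BigOperators
open scoped ComplexOrder

noncomputable section

theorem stmt18 {n : ℕ} (ψ χ : Fin n → ℂ) (hψ : unitv ψ) (hχ : unitv χ)
    (t : ℝ) (ht : star ψ ⬝ᵥ χ = (t : ℂ)) :
    ∃ ρ σ : Fin n → ℂ, unitv ρ ∧ unitv σ ∧
      (1 / 2 : ℂ) • (kron ψ χ + kron χ ψ) =
        ((|1 + t| / 2 : ℝ) : ℂ) • kron ρ ρ + ((|1 - t| / 2 : ℝ) : ℂ) • kron σ σ ∧
      |1 + t| / 2 + |1 - t| / 2 = 1 := by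
  unfold unitv at hψ hχ ⊢
  have hts : star χ ⬝ᵥ ψ = (t : ℂ) := by
    rw [star_dotProduct, ht]; simp
  have hm : star (ψ - χ) ⬝ᵥ (ψ - χ) = ((2 - 2*t : ℝ) : ℂ) := by
    simp only [star_sub, sub_dotProduct, dotProduct_sub, hψ, hχ, ht, hts]
    push_cast; ring
  have hp : star (ψ + χ) ⬝ᵥ (ψ + χ) = ((2 + 2*t : ℝ) : ℂ) := by
    simp only [star_add, add_dotProduct, dotProduct_add, hψ, hχ, ht, hts]
    push_cast; ring
  have ht1 : t ≤ 1 := by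
    have := dotProduct_star_self_nonneg (ψ - χ)
    rw [hm] at this
    have : (0:ℝ) ≤ 2 - 2*t := by exact_mod_cast this
    linarith
  have ht2 : -1 ≤ t := by
    have := dotProduct_star_self_nonneg (ψ + χ)
    rw [hp] at this
    have : (0:ℝ) ≤ 2 + 2*t := by exact_mod_cast this
    linarith
  have ha1 : |1 + t| = 1 + t := abs_of_nonneg (by linarith)
  have ha2 : |1 - t| = 1 - t := abs_of_nonneg (by linarith)
  have hsum : |1 + t| / 2 + |1 - t| / 2 = 1 := by rw [ha1, ha2]; ring
  by_cases h1 : t = 1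
  · -- ψ = χ
    have hv : ψ - χ = 0 := by
      rw [← dotProduct_star_self_eq_zero (v := ψ - χ), hm, h1]; norm_num
    have hpc : ψ = χ := by rwa [sub_eq_zero] at hv
    have e1 : ((|1 + t| / 2 : ℝ) : ℂ) = 1 := by rw [ha1, h1]; norm_num
    have e2 : ((|1 - t| / 2 : ℝ) : ℂ) = 0 := by rw [ha2, h1]; norm_num
    refine ⟨ψ, ψ, hψ, hψ, ?_, hsum⟩
    subst hpc
    funext p
    simp only [e1, e2, kron, Pi.add_apply, Pi.smul_apply, smul_eq_mul]
    ring
  · by_cases h2 : t = -1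
    · -- χ = -ψ
      have hv : ψ + χ = 0 := by
        rw [← dotProduct_star_self_eq_zero (v := ψ + χ), hp, h2]; norm_num
      have hpc : χ = -ψ := eq_neg_of_add_eq_zero_right hv
      have hσu : star (Complex.I • ψ) ⬝ᵥ (Complex.I • ψ) = 1 := by
        rw [star_smul, smul_dotProduct, dotProduct_smul, hψ]
        simp [Complex.star_def, Complex.conj_I]
      have e1 : ((|1 + t| / 2 : ℝ) : ℂ) = 0 := by rw [ha1, h2]; norm_num
      have e2 : ((|1 - t| / 2 : ℝ) : ℂ) = 1 := by rw [ha2, h2]; norm_num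
      refine ⟨ψ, Complex.I • ψ, hψ, hσu, ?_, hsum⟩
      subst hpc
      funext p
      simp only [e1, e2, kron, Pi.add_apply, Pi.smul_apply, Pi.neg_apply, smul_eq_mul]
      simp [Complex.I_mul_I]; ring_nf
      rw [Complex.I_sq]; ring
    · have h1p : (0:ℝ) < 1 + t := by
        rcases lt_or_eq_of_le ht2 with h | h
        · linarith
        · exact absurd h.symm h2
      have h2p : (0:ℝ) < 1 - t := by
        rcases lt_or_eq_of_le ht1 with h | h
        · linarith
        · exact absurd h h1
      set c : ℝ := Real.sqrt (2 + 2*t) with hc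
      set d : ℝ := Real.sqrt (2 - 2*t) with hd
      have hc2 : (c:ℂ) * c = ((2 + 2*t : ℝ) : ℂ) := by
        rw [← Complex.ofReal_mul, Real.mul_self_sqrt (by linarith)]
      have hd2 : (d:ℂ) * d = ((2 - 2*t : ℝ) : ℂ) := by
        rw [← Complex.ofReal_mul, Real.mul_self_sqrt (by linarith)]
      have hcne : (c:ℂ) ≠ 0 := by
        simp only [ne_eq, Complex.ofReal_eq_zero]
        exact Real.sqrt_ne_zero'.mpr (by linarith)
      have hdne : (d:ℂ) ≠ 0 := by
        simp only [ne_eq, Complex.ofReal_eq_zero]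
        exact Real.sqrt_ne_zero'.mpr (by linarith)
      refine ⟨(c:ℂ)⁻¹ • (ψ + χ), (Complex.I * (d:ℂ)⁻¹) • (ψ - χ), ?_, ?_, ?_, hsum⟩
      · rw [star_smul, smul_dotProduct, dotProduct_smul, hp]
        simp only [star_inv₀, RCLike.star_def, Complex.conj_ofReal, smul_eq_mul]
        field_simp
        rw [sq (c:ℂ), hc2]; push_cast; ring
      · rw [star_smul, smul_dotProduct, dotProduct_smul, hm]
        simp only [star_mul', star_inv₀, RCLike.star_def, Complex.conj_ofReal,
          Complex.conj_I, smul_eq_mul]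
        field_simp
        rw [sq (d:ℂ), hd2]; push_cast; ring_nf; rw [Complex.I_sq]; ring
      · funext p
        simp only [kron, Pi.add_apply, Pi.smul_apply, Pi.sub_apply, smul_eq_mul, ha1, ha2]
        have e1 : ((((1:ℝ) + t) / 2 : ℝ) : ℂ) = (1 + (t:ℂ)) / 2 := by push_cast; ring
        have e2 : ((((1:ℝ) - t) / 2 : ℝ) : ℂ) = (1 - (t:ℂ)) / 2 := by push_cast; ring
        rw [e1, e2]
        field_simp
        rw [sq (c:ℂ), sq (d:ℂ), hc2, hd2]
        push_cast
        ring_nf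
        rw [Complex.I_sq]
        ring
end
end
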